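/- Let X ∈ U(n, q^s) be a balanced lattice design with n ≥ 2, s ≥ 2, such that q(n−1) divides s(n−q). Then Ave(χ²)(X) ≥ n²(q−1)((q−1)s − n + 1)/(q²(s−1)(n−1)). -/

import Mathlib

open Finset

/-- A design `X ∈ U(n, q^s)` is balanced: `q ∣ n` and every level occurs exactly
`n / q` times in each column. -/
def IsBalanced {n s q : ℕ} (X : Fin n → Fin s → Fin q) : Prop :=
  q ∣ n ∧ ∀ (j : Fin s) (ℓ : Fin q),
    (univ.filter fun i => X i j = ℓ).card = n / q

/-- The index set of pairs 1 ≤ i < k ≤ n. -/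
def pairs (n : ℕ) : Finset (Fin n × Fin n) := univ.filter fun p => p.1 < p.2

/-- The nonorthogonality criterion
Ave(χ²)(X) = (2/(s(s−1))) ∑_{j<l} ∑_{τ₁,τ₂} (N^{(j,l)}_{τ₁,τ₂} − n/q²)². -/
noncomputable def aveChiSq {n s q : ℕ} (X : Fin n → Fin s → Fin q) : ℝ :=
  2 / ((s : ℝ) * ((s : ℝ) - 1)) *
    ∑ p ∈ pairs s, ∑ τ : Fin q × Fin q,
      (((univ.filter fun i => X i p.1 = τ.1 ∧ X i p.2 = τ.2).card : ℝ)
        - (n : ℝ) / (q : ℝ) ^ 2) ^ 2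

lemma helperA {α β : Type*} [Fintype α] [DecidableEq β] [Fintype β] (f : α → β) :
    ∑ b : β, ((univ.filter fun a => f a = b).card) ^ 2
      = (univ.filter fun p : α × α => f p.1 = f p.2).card := by
  rw [Finset.card_eq_sum_card_fiberwise (f := fun p : α × α => f p.1)
    (t := univ) (fun _ _ => mem_univ _)]
  refine Finset.sum_congr rfl fun b _ => ?_
  have : ((univ.filter fun p : α × α => f p.1 = f p.2).filter fun p => f p.1 = b)
      = (univ.filter fun a => f a = b) ×ˢ (univ.filter fun a => f a = b) := by
    ext p
    simp only [mem_filter, mem_univ, true_and, mem_product]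
    constructor
    · rintro ⟨h1, h2⟩; exact ⟨h2, h1.symm.trans h2⟩
    · rintro ⟨h1, h2⟩; exact ⟨h1.trans h2.symm, h1⟩
  rw [this, card_product, sq]

lemma helperB {α β : Type*} [Fintype β] (P : Finset α) (r : α → β → Prop)
    [∀ a, DecidablePred (r a)] :
    ∑ a ∈ P, ((univ : Finset β).filter (r a)).card
      = ∑ b : β, (P.filter fun a => r a b).card := by
  simp only [Finset.card_filter]
  rw [Finset.sum_comm]

lemma helperC {s : ℕ} (f : Fin s × Fin s → ℕ) (hf : ∀ a b, f (a, b) = f (b, a)) :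
    ∑ p ∈ (univ : Finset (Fin s)).offDiag, f p = 2 * ∑ p ∈ pairs s, f p := by
  rw [← Finset.sum_filter_add_sum_filter_not ((univ : Finset (Fin s)).offDiag)
    (fun p => p.1 < p.2)]
  have h1 : ((univ : Finset (Fin s)).offDiag).filter (fun p => p.1 < p.2) = pairs s := by
    ext ⟨a, b⟩
    simp only [pairs, mem_filter, Finset.mem_offDiag, mem_univ, true_and]
    exact ⟨fun h => h.2, fun h => ⟨ne_of_lt h, h⟩⟩
  have h2 : ∑ p ∈ ((univ : Finset (Fin s)).offDiag).filter (fun p => ¬ p.1 < p.2), f p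
      = ∑ p ∈ pairs s, f p := by
    refine Finset.sum_nbij' (i := Prod.swap) (j := Prod.swap) ?_ ?_ ?_ ?_ ?_
    · rintro ⟨a, b⟩ h
      simp only [mem_filter, Finset.mem_offDiag, mem_univ, true_and] at h
      simp only [pairs, mem_filter, mem_univ, true_and, Prod.swap]
      exact lt_of_le_of_ne (not_lt.mp h.2) (Ne.symm h.1)
    · rintro ⟨a, b⟩ h
      simp only [pairs, mem_filter, mem_univ, true_and] at h
      simp only [mem_filter, Finset.mem_offDiag, mem_univ, true_and, Prod.swap]
      exact ⟨ne_of_gt h, not_lt.mpr (le_of_lt h)⟩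
    · intro a _; exact Prod.swap_swap a
    · intro a _; exact Prod.swap_swap a
    · rintro ⟨a, b⟩ _; exact (hf b a).symm
  rw [h1, h2, two_mul]

lemma nat_le_mul_self (a : ℕ) : a ≤ a * a := by
  cases a with
  | zero => simp
  | succ b => exact Nat.le_mul_of_pos_left _ (Nat.succ_pos b)

set_option linter.unusedVariables false in
set_option maxHeartbeats 1000000 in
/-- For a balanced design whose PC-mean is an integer (q(n−1) ∣ s(n−q)),
Ave(χ²)(X) ≥ n²(q−1)((q−1)s − n + 1) / (q²(s−1)(n−1)). -/
theorem aveChiSq_integer_lower_bound (n s q : ℕ) (hq : 2 ≤ q) (hn : 2 ≤ n) (hs : 2 ≤ s)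
    (X : Fin n → Fin s → Fin q) (hX : IsBalanced X)
    (hdvd : q * (n - 1) ∣ s * (n - q)) :
    aveChiSq X ≥ (n : ℝ) ^ 2 * ((q : ℝ) - 1) * (((q : ℝ) - 1) * s - n + 1) /
      ((q : ℝ) ^ 2 * ((s : ℝ) - 1) * ((n : ℝ) - 1)) := by
  clear hdvd
  obtain ⟨⟨m, hm⟩, hbal⟩ := hX
  have hq0 : 0 < q := by omega
  have hndq : n / q = m := by rw [hm]; exact Nat.mul_div_cancel_left m hq0
  -- abbreviations
  set lam : Fin n → Fin n → ℕ := fun i k => (univ.filter fun j => X i j = X k j).card with hlamdef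
  set g : Fin s × Fin s → ℕ := fun p =>
    ∑ τ : Fin q × Fin q, ((univ.filter fun i => X i p.1 = τ.1 ∧ X i p.2 = τ.2).card) ^ 2
    with hgdef
  -- Step 1 : g as a pair count
  have step1 : ∀ j l : Fin s, g (j, l)
      = (univ.filter fun p : Fin n × Fin n => X p.1 j = X p.2 j ∧ X p.1 l = X p.2 l).card := by
    intro j l
    have h := helperA (fun i : Fin n => (X i j, X i l))
    simpa only [Prod.mk.injEq, Prod.ext_iff] using h
  -- row sums of N are n
  have hrow : ∀ j l : Fin s,
      ∑ τ : Fin q × Fin q, (univ.filter fun i => X i j = τ.1 ∧ X i l = τ.2).card = n := by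
    intro j l
    have h := Finset.card_eq_sum_card_fiberwise (f := fun i : Fin n => (X i j, X i l))
      (s := univ) (t := (univ : Finset (Fin q × Fin q))) (fun _ _ => mem_univ _)
    simp only [card_univ, Fintype.card_fin, Prod.ext_iff] at h
    exact h.symm
  -- Step 2 : per-column pair count from balance
  have hcol : ∀ j : Fin s,
      (univ.filter fun p : Fin n × Fin n => X p.1 j = X p.2 j).card = q * m ^ 2 := by
    intro j
    have h := helperA (fun i : Fin n => X i j)
    rw [← h]
    have : ∀ b : Fin q, ((univ.filter fun a : Fin n => X a j = b).card) ^ 2 = m ^ 2 := by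
      intro b; rw [hbal j b, hndq]
    rw [Finset.sum_congr rfl fun b _ => this b, Finset.sum_const, card_univ,
      Fintype.card_fin, smul_eq_mul]
  -- total coincidence sum
  have F1 : ∑ p ∈ (univ : Finset (Fin n × Fin n)), lam p.1 p.2 = s * (q * m ^ 2) := by
    have h := helperB (univ : Finset (Fin n × Fin n))
      (fun p (j : Fin s) => X p.1 j = X p.2 j)
    calc ∑ p ∈ (univ : Finset (Fin n × Fin n)), lam p.1 p.2
        = ∑ p ∈ (univ : Finset (Fin n × Fin n)),
            ((univ : Finset (Fin s)).filter fun j => X p.1 j = X p.2 j).card := by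
          exact Finset.sum_congr rfl fun p _ => rfl
      _ = ∑ j : Fin s, ((univ : Finset (Fin n × Fin n)).filter
            fun p => X p.1 j = X p.2 j).card := h
      _ = ∑ _j : Fin s, q * m ^ 2 := Finset.sum_congr rfl fun j _ => hcol j
      _ = s * (q * m ^ 2) := by rw [Finset.sum_const, card_univ, Fintype.card_fin, smul_eq_mul]
  -- F2 : off-diagonal column-pair counts equal coincidence off-diag counts
  have F2 : ∑ jl ∈ (univ : Finset (Fin s)).offDiag, g jl
      = ∑ p ∈ (univ : Finset (Fin n × Fin n)),
          ((univ.filter fun j => X p.1 j = X p.2 j).offDiag).card := by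
    calc ∑ jl ∈ (univ : Finset (Fin s)).offDiag, g jl
        = ∑ jl ∈ (univ : Finset (Fin s)).offDiag,
            ((univ : Finset (Fin n × Fin n)).filter
              fun p => X p.1 jl.1 = X p.2 jl.1 ∧ X p.1 jl.2 = X p.2 jl.2).card := by
          refine Finset.sum_congr rfl fun jl _ => ?_
          obtain ⟨j, l⟩ := jl
          exact step1 j l
      _ = ∑ p : Fin n × Fin n, (((univ : Finset (Fin s)).offDiag).filter
            fun jl => X p.1 jl.1 = X p.2 jl.1 ∧ X p.1 jl.2 = X p.2 jl.2).card :=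
          helperB _ _
      _ = ∑ p ∈ (univ : Finset (Fin n × Fin n)),
            ((univ.filter fun j => X p.1 j = X p.2 j).offDiag).card := by
          refine Finset.sum_congr rfl fun p _ => ?_
          have hset : (((univ : Finset (Fin s)).offDiag).filter
              fun jl => X p.1 jl.1 = X p.2 jl.1 ∧ X p.1 jl.2 = X p.2 jl.2)
              = (univ.filter fun j => X p.1 j = X p.2 j).offDiag := by
            ext ⟨j, l⟩
            simp only [mem_filter, Finset.mem_offDiag, mem_univ, true_and]
            tauto
          rw [hset]
  -- symmetry of g
  have hgsym : ∀ a b : Fin s, g (a, b) = g (b, a) := by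
    intro a b
    refine Fintype.sum_equiv (Equiv.prodComm (Fin q) (Fin q)) _ _ fun τ => ?_
    simp only [Equiv.prodComm_apply, Prod.fst_swap, Prod.snd_swap]
    have hfe : (univ.filter fun i => X i a = τ.1 ∧ X i b = τ.2)
        = (univ.filter fun i => X i b = τ.2 ∧ X i a = τ.1) := by
      ext i
      simp only [mem_filter, mem_univ, true_and]
      tauto
    rw [hfe]; congr
  have F3 : ∑ jl ∈ (univ : Finset (Fin s)).offDiag, g jl = 2 * ∑ jl ∈ pairs s, g jl :=
    helperC g hgsym
  -- cardinality of pairs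
  have F4 : 2 * (pairs s).card = s * s - s := by
    have h := helperC (s := s) (fun _ => 1) (fun _ _ => rfl)
    simp only [Finset.sum_const, smul_eq_mul, mul_one] at h
    rw [← h, Finset.offDiag_card, card_univ, Fintype.card_fin]
  -- split the square-type universe into diagonal and off-diagonal
  have split : ∀ h : Fin n × Fin n → ℕ,
      ∑ p ∈ (univ : Finset (Fin n × Fin n)), h p
        = (∑ a : Fin n, h (a, a)) + ∑ p ∈ (univ : Finset (Fin n)).offDiag, h p := by
    intro h
    rw [← Finset.univ_product_univ, ← Finset.diag_union_offDiag,
      Finset.sum_union (Finset.disjoint_diag_offDiag _), Finset.sum_diag]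
  have hlamdiag : ∀ a : Fin n, lam a a = s := by
    intro a; simp [hlamdef]
  -- key natural-number quantities
  set Λ : ℕ := ∑ p ∈ (univ : Finset (Fin n)).offDiag, lam p.1 p.2 with hΛ
  set T2 : ℕ := ∑ p ∈ (univ : Finset (Fin n)).offDiag, lam p.1 p.2 * lam p.1 p.2 with hT2
  set G : ℕ := ∑ jl ∈ pairs s, g jl with hG
  have R1 : n * s + Λ = s * (q * m ^ 2) := by
    rw [← F1, split (fun p => lam p.1 p.2)]
    congr 1
    rw [Finset.sum_congr rfl fun a _ => hlamdiag a, Finset.sum_const, card_univ,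
      Fintype.card_fin, smul_eq_mul]
  have R2 : 2 * G + (n * s + Λ) = T2 + n * (s * s) := by
    have perterm : ∀ p : Fin n × Fin n,
        ((univ.filter fun j => X p.1 j = X p.2 j).offDiag).card + lam p.1 p.2
          = lam p.1 p.2 * lam p.1 p.2 := by
      intro p
      rw [Finset.offDiag_card]
      exact Nat.sub_add_cancel (nat_le_mul_self _)
    have e1 : (∑ p ∈ (univ : Finset (Fin n × Fin n)),
        ((univ.filter fun j => X p.1 j = X p.2 j).offDiag).card)
        + ∑ p ∈ (univ : Finset (Fin n × Fin n)), lam p.1 p.2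
        = ∑ p ∈ (univ : Finset (Fin n × Fin n)), lam p.1 p.2 * lam p.1 p.2 := by
      rw [← Finset.sum_add_distrib]
      exact Finset.sum_congr rfl fun p _ => perterm p
    have hd1 : ∑ a : Fin n, lam a a = n * s := by
      rw [Finset.sum_congr rfl fun a _ => hlamdiag a, Finset.sum_const, card_univ,
        Fintype.card_fin, smul_eq_mul]
    have hd2 : ∑ a : Fin n, lam a a * lam a a = n * (s * s) := by
      have : ∀ a : Fin n, lam a a * lam a a = s * s := fun a => by rw [hlamdiag a]
      rw [Finset.sum_congr rfl fun a _ => this a, Finset.sum_const, card_univ,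
        Fintype.card_fin, smul_eq_mul]
    have e2 : ∑ p ∈ (univ : Finset (Fin n × Fin n)), lam p.1 p.2 = n * s + Λ := by
      rw [split (fun p => lam p.1 p.2), hd1]
    have e3 : ∑ p ∈ (univ : Finset (Fin n × Fin n)), lam p.1 p.2 * lam p.1 p.2
        = n * (s * s) + T2 := by
      rw [split (fun p => lam p.1 p.2 * lam p.1 p.2), hd2]
    have e4 : 2 * G = ∑ p ∈ (univ : Finset (Fin n × Fin n)),
        ((univ.filter fun j => X p.1 j = X p.2 j).offDiag).card := by
      rw [← F3, F2]
    rw [e4]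
    rw [← e2] at *
    omega
  -- Cauchy–Schwarz
  have hcardoff : ((univ : Finset (Fin n)).offDiag).card = n * n - n := by
    rw [Finset.offDiag_card, card_univ, Fintype.card_fin]
  have R3 : (Λ : ℝ) ^ 2 ≤ ((n : ℝ) * n - n) * (T2 : ℝ) := by
    have h := sq_sum_le_card_mul_sum_sq
      (s := (univ : Finset (Fin n)).offDiag) (f := fun p => (lam p.1 p.2 : ℝ))
    have hcast : (((univ : Finset (Fin n)).offDiag).card : ℝ) = (n : ℝ) * n - n := by
      rw [hcardoff]
      have : n ≤ n * n := nat_le_mul_self n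
      push_cast [Nat.cast_sub this]
      ring
    calc (Λ : ℝ) ^ 2 = (∑ p ∈ (univ : Finset (Fin n)).offDiag, (lam p.1 p.2 : ℝ)) ^ 2 := by
          rw [hΛ]; push_cast; ring
      _ ≤ (((univ : Finset (Fin n)).offDiag).card : ℝ)
            * ∑ p ∈ (univ : Finset (Fin n)).offDiag, (lam p.1 p.2 : ℝ) ^ 2 := h
      _ = ((n : ℝ) * n - n) * (T2 : ℝ) := by
          rw [hcast, hT2]
          push_cast
          congr 1
          exact Finset.sum_congr rfl fun p _ => by rw [pow_two]
  -- rewrite aveChiSq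
  have have_ave : aveChiSq X = 2 / ((s : ℝ) * ((s : ℝ) - 1))
      * ((G : ℝ) - ((pairs s).card : ℝ) * ((n : ℝ) ^ 2 / (q : ℝ) ^ 2)) := by
    unfold aveChiSq
    congr 1
    have hq0' : (q : ℝ) ≠ 0 := by positivity
    have hexp : ∀ p ∈ pairs s, ∑ τ : Fin q × Fin q,
        (((univ.filter fun i => X i p.1 = τ.1 ∧ X i p.2 = τ.2).card : ℝ)
          - (n : ℝ) / (q : ℝ) ^ 2) ^ 2
        = (g p : ℝ) - (n : ℝ) ^ 2 / (q : ℝ) ^ 2 := by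
      rintro ⟨j, l⟩ _
      have hr : ∑ τ : Fin q × Fin q,
          ((univ.filter fun i => X i j = τ.1 ∧ X i l = τ.2).card : ℝ) = (n : ℝ) := by
        rw [← Nat.cast_sum]
        exact_mod_cast congrArg (Nat.cast : ℕ → ℝ) (hrow j l)
      have hgc : (g (j, l) : ℝ) = ∑ τ : Fin q × Fin q,
          ((univ.filter fun i => X i j = τ.1 ∧ X i l = τ.2).card : ℝ) ^ 2 := by
        rw [hgdef]; push_cast; ring_nf
      set c : ℝ := (n : ℝ) / (q : ℝ) ^ 2 with hc
      calc ∑ τ : Fin q × Fin q,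
            (((univ.filter fun i => X i j = τ.1 ∧ X i l = τ.2).card : ℝ) - c) ^ 2
          = ∑ τ : Fin q × Fin q,
            (((univ.filter fun i => X i j = τ.1 ∧ X i l = τ.2).card : ℝ) ^ 2
              - 2 * c * ((univ.filter fun i => X i j = τ.1 ∧ X i l = τ.2).card : ℝ)
              + c ^ 2) := by
            refine Finset.sum_congr rfl fun τ _ => ?_; ring
        _ = (∑ τ : Fin q × Fin q,
              ((univ.filter fun i => X i j = τ.1 ∧ X i l = τ.2).card : ℝ) ^ 2)
            - 2 * c * (∑ τ : Fin q × Fin q,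
              ((univ.filter fun i => X i j = τ.1 ∧ X i l = τ.2).card : ℝ))
            + (q * q : ℝ) * c ^ 2 := by
            rw [Finset.sum_add_distrib, Finset.sum_sub_distrib, ← Finset.mul_sum,
              Finset.sum_const, card_univ, Fintype.card_prod, Fintype.card_fin,
              nsmul_eq_mul]
            push_cast; ring
        _ = (g (j, l) : ℝ) - (n : ℝ) ^ 2 / (q : ℝ) ^ 2 := by
            rw [hgc, hr, hc]; field_simp; ring
    rw [Finset.sum_congr rfl hexp, Finset.sum_sub_distrib, Finset.sum_const,
      nsmul_eq_mul, hG]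
    push_cast
    ring
  -- final arithmetic
  have hs' : (2 : ℝ) ≤ (s : ℝ) := by exact_mod_cast hs
  have hn' : (2 : ℝ) ≤ (n : ℝ) := by exact_mod_cast hn
  have hq' : (2 : ℝ) ≤ (q : ℝ) := by exact_mod_cast hq
  have hq0' : (0 : ℝ) < (q : ℝ) := by linarith
  have hs1 : (0 : ℝ) < (s : ℝ) * ((s : ℝ) - 1) := by nlinarith
  have hden : (0 : ℝ) < (q : ℝ) ^ 2 * ((s : ℝ) - 1) * ((n : ℝ) - 1) := by
    have h1 : (0 : ℝ) < (q : ℝ) ^ 2 := by positivity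
    have h2 : (0 : ℝ) < (s : ℝ) - 1 := by linarith
    have h3 : (0 : ℝ) < (n : ℝ) - 1 := by linarith
    exact mul_pos (mul_pos h1 h2) h3
  have hP : 2 * ((pairs s).card : ℝ) = (s : ℝ) * s - s := by
    have hle : s ≤ s * s := nat_le_mul_self s
    have := congrArg (Nat.cast : ℕ → ℝ) F4
    push_cast [Nat.cast_sub hle] at this
    linarith
  have R1' : (n : ℝ) * s + (Λ : ℝ) = (s : ℝ) * ((q : ℝ) * (m : ℝ) ^ 2) := by
    exact_mod_cast congrArg (Nat.cast : ℕ → ℝ) R1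
  have R2' : 2 * (G : ℝ) + ((n : ℝ) * s + (Λ : ℝ)) = (T2 : ℝ) + (n : ℝ) * ((s : ℝ) * s) := by
    exact_mod_cast congrArg (Nat.cast : ℕ → ℝ) R2
  have hm' : (n : ℝ) = (q : ℝ) * (m : ℝ) := by exact_mod_cast hm
  have hΛv : (Λ : ℝ) = (s : ℝ) * ((q : ℝ) * (m : ℝ) ^ 2) - (n : ℝ) * s := by linarith
  have hGP : 2 * ((G : ℝ) - ((pairs s).card : ℝ) * ((n : ℝ) ^ 2 / (q : ℝ) ^ 2))
      = ((T2 : ℝ) + (n : ℝ) * ((s : ℝ) * s) - (n : ℝ) * s - (Λ : ℝ))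
        - ((s : ℝ) * s - s) * ((n : ℝ) ^ 2 / (q : ℝ) ^ 2) := by
    linear_combination R2' - ((n : ℝ) ^ 2 / (q : ℝ) ^ 2) * hP
  rw [have_ave, ge_iff_le,
    show (2 : ℝ) / ((s : ℝ) * ((s : ℝ) - 1))
        * ((G : ℝ) - ((pairs s).card : ℝ) * ((n : ℝ) ^ 2 / (q : ℝ) ^ 2))
      = (2 * ((G : ℝ) - ((pairs s).card : ℝ) * ((n : ℝ) ^ 2 / (q : ℝ) ^ 2)))
        / ((s : ℝ) * ((s : ℝ) - 1)) from by ring,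
    div_le_div_iff₀ hden hs1, hGP]
  set B : ℝ := ((T2 : ℝ) + (n : ℝ) * ((s : ℝ) * s) - (n : ℝ) * s - (Λ : ℝ))
    - ((s : ℝ) * s - s) * ((n : ℝ) ^ 2 / (q : ℝ) ^ 2) with hB
  set Lnum : ℝ := (n : ℝ) ^ 2 * ((q : ℝ) - 1) * (((q : ℝ) - 1) * s - n + 1) with hL
  have hq2n : (0 : ℝ) < (q : ℝ) ^ 2 * n := by positivity
  have hD : (0 : ℝ) ≤ ((n : ℝ) * n - n) * (T2 : ℝ) - (Λ : ℝ) ^ 2 := by linarith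
  have hident : (B * ((q : ℝ) ^ 2 * ((s : ℝ) - 1) * ((n : ℝ) - 1))
        - Lnum * ((s : ℝ) * ((s : ℝ) - 1))) * ((q : ℝ) ^ 2 * n)
      = (q : ℝ) ^ 4 * ((s : ℝ) - 1) * (((n : ℝ) * n - n) * (T2 : ℝ) - (Λ : ℝ) ^ 2) := by
    rw [hB, hL, hΛv, hm']
    field_simp
    ring
  have h0 : (0 : ℝ) ≤ (B * ((q : ℝ) ^ 2 * ((s : ℝ) - 1) * ((n : ℝ) - 1))
      - Lnum * ((s : ℝ) * ((s : ℝ) - 1))) * ((q : ℝ) ^ 2 * n) := by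
    rw [hident]
    exact mul_nonneg (mul_nonneg (by positivity) (by linarith)) hD
  have h1 : (0 : ℝ) ≤ B * ((q : ℝ) ^ 2 * ((s : ℝ) - 1) * ((n : ℝ) - 1))
      - Lnum * ((s : ℝ) * ((s : ℝ) - 1)) :=
    nonneg_of_mul_nonneg_left h0 hq2n
  linarith
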